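/- In the category of groups, the kernel of the canonical map from the free product X ∗ Y to the direct product X × Y (sending each factor identically) is generated by the commutators [ι_X(x), ι_Y(y)] for x ∈ X, y ∈ Y. -/

import Mathlib

open Monoid
open scoped Monoid.Coprod
open scoped commutatorElement

section aux
variable {X Y : Type*} [Group X] [Group Y]

private def CC (X Y : Type*) [Group X] [Group Y] : Subgroup (X ∗ Y) :=
  Subgroup.closure
    {g : X ∗ Y | ∃ (x : X) (y : Y), g = ⁅(Coprod.inl x : X ∗ Y), Coprod.inr y⁆}

private lemma gen_mem (x : X) (y : Y) :
    ⁅(Coprod.inl x : X ∗ Y), Coprod.inr y⁆ ∈ CC X Y :=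
  Subgroup.subset_closure ⟨x, y, rfl⟩

private lemma conj_inl_mem (a : X) {n : X ∗ Y} (hn : n ∈ CC X Y) :
    Coprod.inl a * n * (Coprod.inl a)⁻¹ ∈ CC X Y := by
  have : CC X Y ≤ (CC X Y).comap ((MulAut.conj (Coprod.inl a : X ∗ Y)).toMonoidHom) := by
    rw [CC]
    apply Subgroup.closure_le _ |>.2
    rintro g ⟨x, y, rfl⟩
    simp only [Set.mem_preimage, SetLike.mem_coe, Subgroup.mem_comap,
      MulEquiv.coe_toMonoidHom, MulAut.conj_apply]
    have key : Coprod.inl a * ⁅(Coprod.inl x : X ∗ Y), Coprod.inr y⁆ * (Coprod.inl a)⁻¹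
        = ⁅(Coprod.inl (a * x) : X ∗ Y), Coprod.inr y⁆ * ⁅(Coprod.inl a : X ∗ Y), Coprod.inr y⁆⁻¹ := by
      simp only [commutatorElement_def, map_mul, mul_inv_rev]
      group
    rw [key]
    exact mul_mem (gen_mem _ _) (inv_mem (gen_mem _ _))
  simpa using this hn

private lemma conj_inr_mem (b : Y) {n : X ∗ Y} (hn : n ∈ CC X Y) :
    Coprod.inr b * n * (Coprod.inr b)⁻¹ ∈ CC X Y := by
  have : CC X Y ≤ (CC X Y).comap ((MulAut.conj (Coprod.inr b : X ∗ Y)).toMonoidHom) := by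
    rw [CC]
    apply Subgroup.closure_le _ |>.2
    rintro g ⟨x, y, rfl⟩
    simp only [Set.mem_preimage, SetLike.mem_coe, Subgroup.mem_comap,
      MulEquiv.coe_toMonoidHom, MulAut.conj_apply]
    have key : Coprod.inr b * ⁅(Coprod.inl x : X ∗ Y), Coprod.inr y⁆ * (Coprod.inr b)⁻¹
        = ⁅(Coprod.inl x : X ∗ Y), (Coprod.inr b : X ∗ Y)⁆⁻¹ * ⁅(Coprod.inl x : X ∗ Y), (Coprod.inr (b * y) : X ∗ Y)⁆ := by
      simp only [commutatorElement_def, map_mul, mul_inv_rev]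
      group
    rw [key]
    exact mul_mem (inv_mem (gen_mem _ _)) (gen_mem _ _)
  simpa using this hn

private lemma CC_normal : (CC X Y).Normal := by
  rw [← Subgroup.normalizer_eq_top_iff, eq_top_iff, ← Coprod.closure_range_inl_union_inr (G := X) (H := Y)]
  apply Subgroup.closure_le _ |>.2
  rintro g (⟨a, rfl⟩ | ⟨b, rfl⟩) <;>
    refine Subgroup.mem_normalizer_iff.2 fun n => ⟨fun hn => ?_, fun hn => ?_⟩
  · exact conj_inl_mem a hn
  · have := conj_inl_mem a⁻¹ hn
    simpa [mul_assoc] using this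
  · exact conj_inr_mem b hn
  · have := conj_inr_mem b⁻¹ hn
    simpa [mul_assoc] using this

end aux

/-- In the category of groups, the kernel of the canonical map from the free product
`X ∗ Y` to the direct product `X × Y` is generated by the commutators
`[ι_X(x), ι_Y(y)]` for `x ∈ X`, `y ∈ Y`. -/
theorem stmt_2 (X Y : Type*) [Group X] [Group Y] :
    MonoidHom.ker (Coprod.toProd : X ∗ Y →* X × Y) =
      Subgroup.closure
        {g : X ∗ Y | ∃ (x : X) (y : Y), g = ⁅(Coprod.inl x : X ∗ Y), Coprod.inr y⁆} := by
  haveI hN : (CC X Y).Normal := CC_normal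
  apply le_antisymm
  · -- ker ≤ closure
    intro w hw
    let q : X ∗ Y →* (X ∗ Y) ⧸ (CC X Y) := QuotientGroup.mk' (CC X Y)
    have hcomm : ∀ (x : X) (y : Y), Commute (q (Coprod.inl x)) (q (Coprod.inr y)) := by
      intro x y
      rw [Commute, SemiconjBy, ← map_mul, ← map_mul]
      have h1 : q ⁅(Coprod.inl x : X ∗ Y), Coprod.inr y⁆ = 1 :=
        (QuotientGroup.eq_one_iff _).2 (gen_mem x y)
      rw [map_commutatorElement] at h1
      have := commutatorElement_eq_one_iff_commute.1 h1
      simpa [Commute, SemiconjBy] using this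
    let φ : X × Y →* (X ∗ Y) ⧸ (CC X Y) :=
      MonoidHom.noncommCoprod (q.comp Coprod.inl) (q.comp Coprod.inr) hcomm
    have hφ : φ.comp Coprod.toProd = q := by
      apply Coprod.hom_ext <;> ext z <;>
        simp [φ, Coprod.toProd_apply_inl, Coprod.toProd_apply_inr]
    have : q w = 1 := by
      have := congrArg (fun f => f w) hφ
      simp only [MonoidHom.comp_apply] at this
      rw [← this, MonoidHom.mem_ker.1 hw, map_one]
    show w ∈ CC X Y
    exact (QuotientGroup.eq_one_iff (N := CC X Y) w).1 this
  · apply Subgroup.closure_le _ |>.2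
    rintro g ⟨x, y, rfl⟩
    simp only [SetLike.mem_coe, MonoidHom.mem_ker]
    rw [commutatorElement_def]
    simp [Coprod.toProd_apply_inl, Coprod.toProd_apply_inr, commutatorElement_def,
      Prod.ext_iff]
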